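/- arXiv:2403.15350 — 4 statements merged into one kernel-verified Lean document; each statement's English description precedes it below -/
import Mathlib

section
/- For any pair of complex numbers z, z' and any real α ≥ 1, the identity |z|^{α-1} z - |z'|^{α-1} z' = ((α+1)/2) (∫₀¹ |Z_λ|^{α-1} dλ)(z - z') + ((α-1)/2) (∫₀¹ |Z_λ|^{α-3} Z_λ² dλ) · conj(z - z') holds, where Z_λ := λz + (1-λ)z'. -/
open Complex


noncomputable def Zl (z z' : ℂ) (l : ℝ) : ℂ := ↑l * z + (1 - ↑l) * z'

noncomputable def phiP (α : ℝ) (z z' : ℂ) (l : ℝ) : ℂ :=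
  ((‖Zl z z' l‖ ^ (α - 1) : ℝ) : ℂ) * Zl z z' l

noncomputable def FdP (α : ℝ) (z z' : ℂ) (l : ℝ) : ℂ :=
  (((α + 1) / 2 : ℝ) : ℂ) * (((‖Zl z z' l‖ ^ (α - 1) : ℝ) : ℂ) * (z - z'))
  + (((α - 1) / 2 : ℝ) : ℂ) *
      (((‖Zl z z' l‖ ^ (α - 3) : ℝ) : ℂ) * (Zl z z' l) ^ 2
        * (starRingEnd ℂ) (z - z'))

lemma contZl (z z' : ℂ) : Continuous (Zl z z') := by
  unfold Zl; fun_prop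

lemma hasDerivAt_Zl (z z' : ℂ) (l : ℝ) : HasDerivAt (Zl z z') (z - z') l := by
  have h1 : HasDerivAt (fun l : ℝ => (l : ℂ)) 1 l := by
    simpa using (hasDerivAt_id l).ofReal_comp
  have h2 := (h1.mul_const z).add (((hasDerivAt_const l (1:ℂ)).sub h1).mul_const z')
  have : (1:ℂ) * z + (0 - 1) * z' = z - z' := by ring
  rw [this] at h2
  exact h2

lemma hasDerivAt_phi_ne (α : ℝ) (z z' : ℂ) (l : ℝ) (h0 : Zl z z' l ≠ 0) :
    HasDerivAt (phiP α z z') (FdP α z z' l) l := by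
  set w := z - z' with hw
  have hZd := hasDerivAt_Zl z z' l
  set Z := Zl z z' l with hZ
  set a := ‖Z‖ with ha
  have hapos : 0 < a := norm_pos_iff.mpr h0
  have hn2 : (0:ℝ) < ‖Z‖ ^ 2 := by
    exact pow_pos hapos 2
  have hn : HasDerivAt (fun l => ‖Zl z z' l‖ ^ 2) (2 * (inner ℝ Z w)) l := hZd.norm_sq
  have hr : HasDerivAt (fun l => (‖Zl z z' l‖ ^ 2) ^ ((α - 1) / 2))
      (2 * (inner ℝ Z w) * ((α - 1) / 2) * (‖Z‖ ^ 2) ^ ((α - 1) / 2 - 1)) l :=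
    hn.rpow_const (Or.inl (ne_of_gt hn2))
  have hsm := hr.smul hZd
  have hfun : (fun l => (‖Zl z z' l‖ ^ 2) ^ ((α - 1) / 2) • Zl z z' l) = phiP α z z' := by
    funext t
    have hnn : (0:ℝ) ≤ ‖Zl z z' t‖ := norm_nonneg _
    rw [phiP, ← Real.rpow_natCast ‖Zl z z' t‖ 2,
      ← Real.rpow_mul hnn, Complex.real_smul]
    have h22 : ((2:ℕ) * ((α - 1) / 2) : ℝ) = α - 1 := by push_cast; ring
    rw [h22]
  rw [show ((fun l => (‖Zl z z' l‖ ^ 2) ^ ((α - 1) / 2)) • Zl z z') = phiP α z z' from hfun]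
    at hsm
  convert hsm using 1
  · rfl
  have h2q : ((‖Z‖^2:ℝ)) ^ ((α-1)/2) = a ^ (α - 1) := by
    rw [← ha, ← Real.rpow_natCast a 2, ← Real.rpow_mul hapos.le]
    congr 1
    ring
  have h2q' : ((‖Z‖^2:ℝ)) ^ ((α-1)/2 - 1) = a ^ (α - 3) := by
    rw [← ha, ← Real.rpow_natCast a 2, ← Real.rpow_mul hapos.le]
    ring_nf
  have hinner : (inner ℝ Z w) = ((starRingEnd ℂ) Z * w).re := by
    rw [Complex.inner, mul_comm]
  have hab : a ^ (α-3) * a ^ 2 = a ^ (α-1) := by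
    rw [← Real.rpow_natCast a 2, ← Real.rpow_add hapos]
    congr 1
    ring
  have hkey : ((a ^ (α-3) : ℝ) : ℂ) * ((starRingEnd ℂ) Z * Z) = ((a ^ (α-1) : ℝ) : ℂ) := by
    rw [← Complex.normSq_eq_conj_mul_self, Complex.normSq_eq_norm_sq, ← ha, ← Complex.ofReal_mul,
      hab]
  rw [FdP, ← hZ, ← ha, ← hw, h2q, h2q', Complex.real_smul, Complex.real_smul, hinner]
  set t := ((starRingEnd ℂ) Z * w).re with ht
  have hre : ((t : ℝ) : ℂ) = ((starRingEnd ℂ) Z * w + Z * (starRingEnd ℂ) w) / 2 := by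
    have h := Complex.add_conj ((starRingEnd ℂ) Z * w)
    rw [map_mul, Complex.conj_conj] at h
    rw [eq_div_iff (by norm_num : (2:ℂ) ≠ 0)]
    push_cast at h
    linear_combination -h
  push_cast
  rw [hre]
  linear_combination (-((α:ℂ) - 1) / 2 * w) * hkey

lemma FdP_eq_zero (α : ℝ) (hα : 1 < α) (z z' : ℂ) (l : ℝ) (h0 : Zl z z' l = 0) :
    FdP α z z' l = 0 := by
  rw [FdP, h0]
  simp [Real.zero_rpow (by intro h; linarith [h] : α - 1 ≠ 0)]

lemma hasDerivAt_phi_zero (α : ℝ) (hα : 1 < α) (z z' : ℂ) (l : ℝ) (h0 : Zl z z' l = 0) :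
    HasDerivAt (phiP α z z') 0 l := by
  set w := z - z' with hw
  have hlin : ∀ t : ℝ, Zl z z' t = ((t - l : ℝ) : ℂ) * w := by
    intro t
    rw [Zl] at h0 ⊢
    push_cast
    linear_combination h0
  have hs : HasDerivAt (fun r : ℝ => |r| ^ (α - 1) * r) 0 0 := by
    rw [hasDerivAt_iff_tendsto_slope]
    have hcont : Filter.Tendsto (fun r : ℝ => |r| ^ (α - 1)) (nhdsWithin 0 {(0:ℝ)}ᶜ)
        (nhds 0) := by
      have hc : ContinuousAt (fun r : ℝ => |r| ^ (α - 1)) 0 :=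
        (Real.continuousAt_rpow_const _ _ (Or.inr (by linarith))).comp
          continuous_abs.continuousAt
      have h2 := hc.tendsto
      simp only [abs_zero, Real.zero_rpow (by intro h; linarith [h] : α - 1 ≠ 0)] at h2
      exact h2.mono_left nhdsWithin_le_nhds
    refine Filter.Tendsto.congr' ?_ hcont
    filter_upwards [self_mem_nhdsWithin] with r hr
    have hr0 : r ≠ 0 := hr
    rw [slope_def_field]
    field_simp
    simp
  have h1 : HasDerivAt (fun t : ℝ => t - l) 1 l := (hasDerivAt_id l).sub_const l
  have hs' : HasDerivAt (fun r : ℝ => |r| ^ (α - 1) * r) 0 (l - l) := by rwa [sub_self]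
  have hshift : HasDerivAt (fun t : ℝ => |t - l| ^ (α - 1) * (t - l)) 0 l := by
    have := HasDerivAt.comp (h := fun t : ℝ => t - l) l hs' h1
    rw [zero_mul] at this
    exact this
  have hc2 : HasDerivAt
      (fun t : ℝ => ‖w‖ ^ (α - 1) * (|t - l| ^ (α - 1) * (t - l))) 0 l := by
    simpa using hshift.const_mul (‖w‖ ^ (α - 1))
  have hsm := hc2.smul_const w
  have hfun : (fun t : ℝ =>
      (‖w‖ ^ (α - 1) * (|t - l| ^ (α - 1) * (t - l))) • w) = phiP α z z' := by
    funext t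
    rw [phiP, hlin t, norm_mul, Complex.norm_real, Real.norm_eq_abs,
      Real.mul_rpow (abs_nonneg _) (norm_nonneg _), Complex.real_smul]
    push_cast
    ring
  rw [hfun] at hsm
  simpa using hsm

lemma contH1 (α : ℝ) (hα : 1 ≤ α) (z z' : ℂ) :
    Continuous (fun l : ℝ => ((‖Zl z z' l‖ ^ (α - 1) : ℝ) : ℂ)) := by
  refine Complex.continuous_ofReal.comp ?_
  rw [continuous_iff_continuousAt]
  intro l
  exact (Real.continuousAt_rpow_const _ _ (Or.inr (by linarith))).comp
    ((continuous_norm.comp (contZl z z')).continuousAt)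

lemma contH2 (α : ℝ) (hα : 1 < α) (z z' : ℂ) :
    Continuous (fun l : ℝ =>
      ((‖Zl z z' l‖ ^ (α - 3) : ℝ) : ℂ) * (Zl z z' l) ^ 2) := by
  rw [continuous_iff_continuousAt]
  intro l
  by_cases h0 : Zl z z' l = 0
  · have hval : ((‖Zl z z' l‖ ^ (α - 3) : ℝ) : ℂ) * (Zl z z' l) ^ 2 = 0 := by
      rw [h0]; simp
    unfold ContinuousAt
    simp only [hval]
    apply squeeze_zero_norm (a := fun t => ‖Zl z z' t‖ ^ (α - 1))
    · intro t
      have heq : ‖((‖Zl z z' t‖ ^ (α - 3) : ℝ) : ℂ) * (Zl z z' t) ^ 2‖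
          = ‖Zl z z' t‖ ^ (α - 1) := by
        rw [norm_mul, Complex.norm_real, norm_pow, Real.norm_eq_abs,
          _root_.abs_of_nonneg (Real.rpow_nonneg (norm_nonneg _) _),
          ← Real.rpow_natCast (‖Zl z z' t‖) 2,
          ← Real.rpow_add' (norm_nonneg _) (by push_cast; intro h; linarith [h])]
        congr 1
        push_cast
        ring
      exact le_of_eq heq
    · have hc : ContinuousAt (fun t => ‖Zl z z' t‖ ^ (α - 1)) l :=
        (Real.continuousAt_rpow_const _ _ (Or.inr (by linarith))).comp
          ((continuous_norm.comp (contZl z z')).continuousAt)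
      have h2 := hc.tendsto
      simpa [h0, Real.zero_rpow (by intro h; linarith [h] : α - 1 ≠ 0)] using h2
  · have cZ : ContinuousAt (Zl z z') l := (contZl z z').continuousAt
    have cA : ContinuousAt (fun t : ℝ => ‖Zl z z' t‖) l :=
      continuous_norm.continuousAt.comp cZ
    have cR : ContinuousAt (fun t : ℝ => ‖Zl z z' t‖ ^ (α - 3)) l :=
      cA.rpow_const (Or.inl (norm_ne_zero_iff.mpr h0))
    exact (Complex.continuous_ofReal.continuousAt.comp cR).mul
      (((contZl z z').pow 2).continuousAt)

/-- The mean-value identity for the power nonlinearity: for `z, z' ∈ ℂ` and real `α ≥ 1`,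
`|z|^{α-1} z - |z'|^{α-1} z' = ((α+1)/2)(∫₀¹ |Z_λ|^{α-1} dλ)(z-z')
  + ((α-1)/2)(∫₀¹ |Z_λ|^{α-3} Z_λ² dλ) conj(z-z')`,
where `Z_λ = λ z + (1-λ) z'` (and `|Z|^{α-3} Z²` is interpreted as `0` when `Z = 0`,
which is the convention of `Real.rpow` since `0^x = 0` for `x ≠ 0`). -/
theorem power_nonlinearity_mvt (z z' : ℂ) (α : ℝ) (hα : 1 ≤ α) :
    (‖z‖ ^ (α - 1) : ℝ) * z - (‖z'‖ ^ (α - 1) : ℝ) * z' =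
      ((α + 1) / 2 : ℝ) *
        (∫ l in (0:ℝ)..1, ((‖l * z + (1 - l) * z'‖ ^ (α - 1) : ℝ) : ℂ)) *
        (z - z')
      + ((α - 1) / 2 : ℝ) *
        (∫ l in (0:ℝ)..1,
          ((‖l * z + (1 - l) * z'‖ ^ (α - 3) : ℝ) : ℂ) *
            (l * z + (1 - l) * z') ^ 2) *
        (starRingEnd ℂ) (z - z') := by
  rcases eq_or_lt_of_le hα with h1 | h1
  · -- α = 1
    subst h1
    norm_num [Real.rpow_zero]
  · -- α > 1
    have hderiv : ∀ t : ℝ, HasDerivAt (phiP α z z') (FdP α z z' t) t := by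
      intro t
      by_cases h0 : Zl z z' t = 0
      · rw [FdP_eq_zero α h1 z z' t h0]
        exact hasDerivAt_phi_zero α h1 z z' t h0
      · exact hasDerivAt_phi_ne α z z' t h0
    have hH1 := contH1 α hα z z'
    have hH2 := contH2 α h1 z z'
    have hFc : Continuous (FdP α z z') := by
      unfold FdP
      exact (continuous_const.mul (hH1.mul continuous_const)).add
        (continuous_const.mul (hH2.mul continuous_const))
    have key := intervalIntegral.integral_eq_sub_of_hasDerivAt (a := (0:ℝ)) (b := 1)
      (fun t _ => hderiv t) (hFc.intervalIntegrable 0 1)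
    have hint1 : IntervalIntegrable
        (fun l : ℝ => ((‖Zl z z' l‖ ^ (α - 1) : ℝ) : ℂ))
        MeasureTheory.volume 0 1 := hH1.intervalIntegrable 0 1
    have hint2 : IntervalIntegrable
        (fun l : ℝ => ((‖Zl z z' l‖ ^ (α - 3) : ℝ) : ℂ) * (Zl z z' l) ^ 2)
        MeasureTheory.volume 0 1 := hH2.intervalIntegrable 0 1
    have hsplit : (∫ t in (0:ℝ)..1, FdP α z z' t)
        = (((α + 1) / 2 : ℝ) : ℂ) *
            (∫ l in (0:ℝ)..1, ((‖Zl z z' l‖ ^ (α - 1) : ℝ) : ℂ)) * (z - z')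
          + (((α - 1) / 2 : ℝ) : ℂ) *
            (∫ l in (0:ℝ)..1,
              ((‖Zl z z' l‖ ^ (α - 3) : ℝ) : ℂ) * (Zl z z' l) ^ 2) *
            (starRingEnd ℂ) (z - z') := by
      unfold FdP
      rw [intervalIntegral.integral_add
        ((hint1.mul_const (z - z')).const_mul _)
        (((hint2.mul_const ((starRingEnd ℂ) (z - z')))).const_mul _),
        intervalIntegral.integral_const_mul, intervalIntegral.integral_const_mul,
        intervalIntegral.integral_mul_const, intervalIntegral.integral_mul_const]
      ring
    have hL : phiP α z z' 1 - phiP α z z' 0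
        = (‖z‖ ^ (α - 1) : ℝ) * z - (‖z'‖ ^ (α - 1) : ℝ) * z' := by
      simp [phiP, Zl]
    rw [← hL, ← key, hsplit]
    simp only [Zl]
end

section
/- For any complex numbers z, z' and any real α ≥ 1, one has | |z|^{α-1} z - |z'|^{α-1} z' | ≤ 2^{α+1} α (|z|^{α-1} + |z'|^{α-1}) |z - z'|. -/
open Complex

/-- Key scalar inequality: for `0 ≤ b ≤ a` and `β ≥ 0`,
`(a^β - b^β) * b ≤ β * a^β * (a - b)`. -/
lemma pow_diff_mul_le (a b β : ℝ) (hb : 0 ≤ b) (hba : b ≤ a) (hβ : 0 ≤ β) :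
    (a ^ β - b ^ β) * b ≤ β * a ^ β * (a - b) := by
  rcases hb.eq_or_lt with rfl | hb0
  · simp only [mul_zero, sub_zero]
    have ha : 0 ≤ a := hba
    positivity
  have ha : 0 < a := lt_of_lt_of_le hb0 hba
  have hble : b ^ β ≤ a ^ β := Real.rpow_le_rpow hb0.le hba hβ
  have hapow : (0:ℝ) < a ^ β := Real.rpow_pos_of_pos ha _
  have hbpow : (0:ℝ) < b ^ β := Real.rpow_pos_of_pos hb0 _
  rcases le_total β 1 with hβ1 | hβ1
  · -- concave case, Bernoulli with exponent ≤ 1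
    have hs : -1 ≤ a / b - 1 := by
      have : 0 ≤ a / b := div_nonneg ha.le hb0.le
      linarith
    have h := rpow_one_add_le_one_add_mul_self hs hβ hβ1
    rw [add_sub_cancel, Real.div_rpow ha.le hb0.le] at h
    have h2 : a ^ β ≤ (1 + β * (a / b - 1)) * b ^ β := (div_le_iff₀ hbpow).mp h
    rw [add_mul, one_mul] at h2
    -- h2 : a ^ β ≤ b ^ β + β * (a / b - 1) * b ^ β
    have e2 : a ^ β - b ^ β ≤ β * (a / b - 1) * b ^ β := by linarith
    have e3 : (a ^ β - b ^ β) * b ≤ β * (a / b - 1) * b ^ β * b :=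
      mul_le_mul_of_nonneg_right e2 hb0.le
    have e4 : β * (a / b - 1) * b ^ β * b = β * (a - b) * b ^ β := by
      field_simp
    rw [e4] at e3
    have e5 : β * (a - b) * b ^ β ≤ β * (a - b) * a ^ β :=
      mul_le_mul_of_nonneg_left hble (mul_nonneg hβ (by linarith))
    nlinarith [e3, e5]
  · -- convex case, Bernoulli with exponent ≥ 1
    have hs : -1 ≤ b / a - 1 := by
      have : 0 ≤ b / a := div_nonneg hb0.le ha.le
      linarith
    have h := one_add_mul_self_le_rpow_one_add hs hβ1
    rw [add_sub_cancel, Real.div_rpow hb0.le ha.le] at h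
    have h2 : (1 + β * (b / a - 1)) * a ^ β ≤ b ^ β := (le_div_iff₀ hapow).mp h
    rw [add_mul, one_mul] at h2
    have hba' : b / a ≤ 1 := (div_le_one ha).mpr hba
    have e2 : a ^ β - b ^ β ≤ β * (1 - b / a) * a ^ β := by nlinarith [h2]
    have e3 : (a ^ β - b ^ β) * b ≤ β * (1 - b / a) * a ^ β * b :=
      mul_le_mul_of_nonneg_right e2 hb0.le
    have e1 : (1 - b / a) * b ≤ a - b := by
      have t1 : (1 - b / a) * b ≤ (1 - b / a) * a :=
        mul_le_mul_of_nonneg_left hba (by linarith)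
      have t2 : (1 - b / a) * a = a - b := by field_simp
      linarith
    have e6 : β * a ^ β * ((1 - b / a) * b) ≤ β * a ^ β * (a - b) :=
      mul_le_mul_of_nonneg_left e1 (mul_nonneg hβ hapow.le)
    nlinarith [e3, e6]

lemma power_nonlinearity_diff_bound_aux (z z' : ℂ) (α : ℝ) (hα : 1 ≤ α)
    (hle : ‖z'‖ ≤ ‖z‖) :
    ‖(‖z‖ ^ (α - 1) : ℝ) * z - (‖z'‖ ^ (α - 1) : ℝ) * z'‖ ≤
      2 ^ (α + 1) * α * (‖z‖ ^ (α - 1) + ‖z'‖ ^ (α - 1)) *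
        ‖z - z'‖ := by
  set a := ‖z‖ with ha
  set b := ‖z'‖ with hb
  have hb0 : 0 ≤ b := norm_nonneg _
  have ha0 : 0 ≤ a := norm_nonneg _
  set β := α - 1 with hβdef
  have hβ : 0 ≤ β := by rw [hβdef]; linarith
  have hble : b ^ β ≤ a ^ β := Real.rpow_le_rpow hb0 hle hβ
  have hapow : (0:ℝ) ≤ a ^ β := Real.rpow_nonneg ha0 _
  have hbpow : (0:ℝ) ≤ b ^ β := Real.rpow_nonneg hb0 _
  have hd0 : 0 ≤ ‖z - z'‖ := norm_nonneg _
  have hsplit : ((a ^ β : ℝ) : ℂ) * z - ((b ^ β : ℝ) : ℂ) * z'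
      = ((a ^ β : ℝ) : ℂ) * (z - z') + (((a ^ β - b ^ β : ℝ)) : ℂ) * z' := by
    push_cast
    ring
  have step1 : ‖((a ^ β : ℝ) : ℂ) * z - ((b ^ β : ℝ) : ℂ) * z'‖
      ≤ a ^ β * ‖z - z'‖ + (a ^ β - b ^ β) * b := by
    rw [hsplit]
    calc ‖((a ^ β : ℝ) : ℂ) * (z - z') + (((a ^ β - b ^ β : ℝ)) : ℂ) * z'‖
        ≤ ‖((a ^ β : ℝ) : ℂ) * (z - z')‖
          + ‖(((a ^ β - b ^ β : ℝ)) : ℂ) * z'‖ := norm_add_le _ _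
      _ = a ^ β * ‖z - z'‖ + (a ^ β - b ^ β) * b := by
          rw [norm_mul, norm_mul, Complex.norm_real, Complex.norm_real, Real.norm_eq_abs, Real.norm_eq_abs,
            _root_.abs_of_nonneg hapow, _root_.abs_of_nonneg (sub_nonneg.mpr hble)]
  have habd : a - b ≤ ‖z - z'‖ := by
    have := abs_norm_sub_norm_le z z'
    rw [← ha, ← hb] at this
    calc a - b ≤ |a - b| := le_abs_self _
      _ ≤ ‖z - z'‖ := this
  have key : (a ^ β - b ^ β) * b ≤ β * a ^ β * (a - b) :=
    pow_diff_mul_le a b β hb0 hle hβ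
  have key2 : (a ^ β - b ^ β) * b ≤ α * a ^ β * ‖z - z'‖ := by
    calc (a ^ β - b ^ β) * b ≤ β * a ^ β * (a - b) := key
      _ ≤ β * a ^ β * ‖z - z'‖ :=
          mul_le_mul_of_nonneg_left habd (mul_nonneg hβ hapow)
      _ ≤ α * a ^ β * ‖z - z'‖ := by
          apply mul_le_mul_of_nonneg_right _ hd0
          apply mul_le_mul_of_nonneg_right _ hapow
          simp only [hβdef]; linarith
  have h4 : (4:ℝ) ≤ 2 ^ (α + 1) := by
    have : (2:ℝ) ^ (2:ℝ) ≤ 2 ^ (α + 1) :=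
      Real.rpow_le_rpow_of_exponent_le one_le_two (by linarith)
    have h22 : (2:ℝ) ^ (2:ℝ) = 4 := by
      rw [show (2:ℝ) = ((2:ℕ):ℝ) from by norm_num, Real.rpow_natCast]; norm_num
    linarith [h22 ▸ this]
  calc ‖((a ^ β : ℝ) : ℂ) * z - ((b ^ β : ℝ) : ℂ) * z'‖
      ≤ a ^ β * ‖z - z'‖ + (a ^ β - b ^ β) * b := step1
    _ ≤ a ^ β * ‖z - z'‖ + α * a ^ β * ‖z - z'‖ := by linarith
    _ = (1 + α) * a ^ β * ‖z - z'‖ := by ring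
    _ ≤ 2 ^ (α + 1) * α * (a ^ β + b ^ β) * ‖z - z'‖ := by
        apply mul_le_mul_of_nonneg_right _ hd0
        have h1 : (1 + α) ≤ 4 * α := by linarith
        have h2 : 4 * α ≤ 2 ^ (α + 1) * α := by nlinarith
        nlinarith [mul_nonneg (mul_nonneg (by linarith : (0:ℝ) ≤ 2 ^ (α+1)) (by linarith : (0:ℝ) ≤ α)) hbpow]

/-- For complex `z, z'` and real `α ≥ 1`,
`| |z|^{α-1} z - |z'|^{α-1} z' | ≤ 2^{α+1} α (|z|^{α-1} + |z'|^{α-1}) |z - z'|`. -/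
theorem power_nonlinearity_diff_bound (z z' : ℂ) (α : ℝ) (hα : 1 ≤ α) :
    ‖(‖z‖ ^ (α - 1) : ℝ) * z - (‖z'‖ ^ (α - 1) : ℝ) * z'‖ ≤
      2 ^ (α + 1) * α * (‖z‖ ^ (α - 1) + ‖z'‖ ^ (α - 1)) *
        ‖z - z'‖ := by
  rcases le_total (‖z'‖) (‖z‖) with h | h
  · exact power_nonlinearity_diff_bound_aux z z' α hα h
  · have := power_nonlinearity_diff_bound_aux z' z α hα h
    rw [norm_sub_rev (((‖z'‖ ^ (α - 1) : ℝ)) * z') _,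
      norm_sub_rev z' z] at this
    calc ‖(‖z‖ ^ (α - 1) : ℝ) * z - (‖z'‖ ^ (α - 1) : ℝ) * z'‖
        ≤ 2 ^ (α + 1) * α * (‖z'‖ ^ (α - 1) + ‖z‖ ^ (α - 1)) *
          ‖z - z'‖ := this
      _ = _ := by ring
end

section
/- For 0 < s < 1 and any k₁ ∈ ℝ, k₂ ≥ 0, the double integral J(k₁, k₂, s) := ∫₀^∞ ∫₀^∞ |e^{i k₁ z₁ - k₂ z₂} - 1|² / (z₁² + z₂²)^{1+s} dz₁ dz₂ is finite and satisfies J(k₁, k₂, s) ≤ C_s (k₁² + k₂²)^s for a constant C_s depending only on s. -/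
open MeasureTheory Set Complex Pointwise

noncomputable def gker (s : ℝ) (z : ℝ × ℝ) : ℝ :=
  min 1 (z.1 ^ 2 + z.2 ^ 2) / (z.1 ^ 2 + z.2 ^ 2) ^ (1 + s)

lemma gker_nonneg (s : ℝ) (z : ℝ × ℝ) : 0 ≤ gker s z := by
  apply div_nonneg
  · exact le_min zero_le_one (by positivity)
  · positivity

lemma gker_measurable (s : ℝ) : Measurable (gker s) := by
  unfold gker; fun_prop

lemma gker_integrableOn {s : ℝ} (hs0 : 0 < s) (hs : s < 1) :
    IntegrableOn (gker s) (Ioi (0:ℝ) ×ˢ Ioi (0:ℝ)) := by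
  set Q : Set (ℝ × ℝ) := Ioi (0:ℝ) ×ˢ Ioi (0:ℝ) with hQ
  set S : Set (ℝ × ℝ) := {z | z.1 ^ 2 + z.2 ^ 2 ≤ 1} with hS
  have hSm : MeasurableSet S := by
    have : Continuous fun z : ℝ × ℝ => z.1 ^ 2 + z.2 ^ 2 := by fun_prop
    exact measurableSet_le this.measurable measurable_const
  have hQm : MeasurableSet Q := measurableSet_Ioi.prod measurableSet_Ioi
  rw [← Set.inter_union_diff Q S]
  apply IntegrableOn.union
  · -- near zero part
    have hφ : IntegrableOn (fun t : ℝ => t ^ (-s)) (Ioc (0:ℝ) 1) := by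
      rw [← intervalIntegrable_iff_integrableOn_Ioc_of_le zero_le_one]
      exact intervalIntegral.intervalIntegrable_rpow' (by linarith)
    have hprod : IntegrableOn (fun z : ℝ × ℝ => z.1 ^ (-s) * z.2 ^ (-s))
        (Ioc (0:ℝ) 1 ×ˢ Ioc (0:ℝ) 1) := by
      rw [IntegrableOn, Measure.volume_eq_prod, ← Measure.prod_restrict]
      exact hφ.mul_prod hφ
    have hsub : Q ∩ S ⊆ Ioc (0:ℝ) 1 ×ˢ Ioc (0:ℝ) 1 := by
      rintro ⟨x, y⟩ ⟨⟨hx, hy⟩, hxy⟩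
      simp only [mem_Ioi] at hx hy
      simp only [hS, mem_setOf_eq] at hxy
      exact ⟨⟨hx, by nlinarith⟩, ⟨hy, by nlinarith⟩⟩
    refine Integrable.mono (hprod.mono_set hsub) ((gker_measurable s).aestronglyMeasurable.restrict) ?_
    refine (ae_restrict_iff' (hQm.inter hSm)).2 (ae_of_all _ ?_)
    rintro ⟨x, y⟩ ⟨⟨hx, hy⟩, hxy⟩
    simp only [mem_Ioi] at hx hy
    simp only [hS, mem_setOf_eq] at hxy
    have hr : 0 < x ^ 2 + y ^ 2 := by positivity
    have h1 : gker s (x, y) = (x ^ 2 + y ^ 2) ^ (-s) := by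
      rw [gker, min_eq_right hxy]
      rw [Real.rpow_add hr, Real.rpow_one, Real.rpow_neg hr.le]
      field_simp
    have h2 : (x ^ 2 + y ^ 2) ^ (-s) ≤ x ^ (-s) * y ^ (-s) := by
      rw [← Real.mul_rpow hx.le hy.le]
      exact Real.rpow_le_rpow_of_nonpos (by positivity) (by nlinarith) (by linarith)
    rw [Real.norm_eq_abs, Real.norm_eq_abs, _root_.abs_of_nonneg (gker_nonneg s _),
      _root_.abs_of_nonneg (by positivity)]
    calc gker s (x, y) = (x ^ 2 + y ^ 2) ^ (-s) := h1
      _ ≤ x ^ (-s) * y ^ (-s) := h2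
  · -- far part
    have hfr : (Module.finrank ℝ (ℝ × ℝ) : ℝ) < 2 + 2 * s := by
      simp [Module.finrank_prod]
      linarith
    have hint : Integrable (fun z : ℝ × ℝ => ((1:ℝ) + ‖z‖ ^ 2) ^ (-(2 + 2 * s) / 2)) :=
      integrable_rpow_neg_one_add_norm_sq hfr
    have hexp : -(2 + 2 * s) / 2 = -(1 + s) := by ring
    refine Integrable.mono ((hint.const_mul ((2:ℝ) ^ (1 + s))).integrableOn)
      ((gker_measurable s).aestronglyMeasurable.restrict) ?_
    refine (ae_restrict_iff' (hQm.diff hSm)).2 (ae_of_all _ ?_)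
    rintro ⟨x, y⟩ ⟨⟨hx, hy⟩, hxy⟩
    simp only [mem_Ioi] at hx hy
    simp only [hS, mem_setOf_eq, not_le] at hxy
    have hr : 0 < x ^ 2 + y ^ 2 := by positivity
    have hnorm : ‖((x, y) : ℝ × ℝ)‖ ^ 2 ≤ x ^ 2 + y ^ 2 := by
      have h1 : ‖((x, y) : ℝ × ℝ)‖ = max |x| |y| := by
        rw [Prod.norm_def, Real.norm_eq_abs, Real.norm_eq_abs]
      rw [h1]
      rcases max_cases |x| |y| with ⟨h, _⟩ | ⟨h, _⟩ <;> rw [h, _root_.sq_abs] <;> nlinarith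
    have key : gker s (x, y) ≤ (2:ℝ) ^ (1 + s) * ((1:ℝ) + ‖((x,y) : ℝ × ℝ)‖ ^ 2) ^ (-(1 + s)) := by
      have h1 : gker s (x, y) ≤ (x ^ 2 + y ^ 2) ^ (-(1 + s)) := by
        rw [gker, Real.rpow_neg hr.le, div_eq_mul_inv]
        calc min 1 (x ^ 2 + y ^ 2) * ((x ^ 2 + y ^ 2) ^ (1 + s))⁻¹
            ≤ 1 * ((x ^ 2 + y ^ 2) ^ (1 + s))⁻¹ :=
              mul_le_mul_of_nonneg_right (min_le_left _ _)
                (by positivity)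
          _ = ((x ^ 2 + y ^ 2) ^ (1 + s))⁻¹ := one_mul _
      have h2 : (1:ℝ) + ‖((x,y) : ℝ × ℝ)‖ ^ 2 ≤ 2 * (x ^ 2 + y ^ 2) := by nlinarith
      have h3 : ((1:ℝ) + ‖((x,y) : ℝ × ℝ)‖ ^ 2) ^ (1 + s) ≤ (2 * (x ^ 2 + y ^ 2)) ^ (1 + s) :=
        Real.rpow_le_rpow (by positivity) h2 (by linarith)
      have h4 : (x ^ 2 + y ^ 2) ^ (-(1 + s)) ≤
          (2:ℝ) ^ (1 + s) * ((1:ℝ) + ‖((x,y) : ℝ × ℝ)‖ ^ 2) ^ (-(1 + s)) := by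
        have ha : (0:ℝ) < (x ^ 2 + y ^ 2) ^ (1 + s) := by positivity
        have hb : (0:ℝ) < ((1:ℝ) + ‖((x,y) : ℝ × ℝ)‖ ^ 2) ^ (1 + s) := by positivity
        rw [Real.mul_rpow (by norm_num) hr.le] at h3
        rw [Real.rpow_neg hr.le, Real.rpow_neg (by positivity), inv_eq_one_div,
          inv_eq_one_div, mul_one_div, div_le_div_iff₀ ha hb]
        linarith
      exact h1.trans h4
    rw [Real.norm_eq_abs, Real.norm_eq_abs, _root_.abs_of_nonneg (gker_nonneg s _),
      _root_.abs_of_nonneg (by positivity), hexp]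
    exact key

lemma gK_nonneg (s K : ℝ) (hK : 0 ≤ K) (z : ℝ × ℝ) :
    0 ≤ min 1 (K * (z.1 ^ 2 + z.2 ^ 2)) / (z.1 ^ 2 + z.2 ^ 2) ^ (1 + s) :=
  div_nonneg (le_min zero_le_one (by positivity)) (by positivity)

set_option maxHeartbeats 2000000 in
/-- For `0 < s < 1` there is a constant `C_s > 0` such that for all `k₁ ∈ ℝ` and
`k₂ ≥ 0`, the kernel integral
`J(k₁,k₂,s) = ∫₀^∞∫₀^∞ |e^{i k₁ z₁ - k₂ z₂} - 1|² / (z₁²+z₂²)^{1+s} dz₁ dz₂`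
is finite and satisfies `J(k₁,k₂,s) ≤ C_s (k₁² + k₂²)^s`. -/
theorem kernel_integral_bound (s : ℝ) (hs0 : 0 < s) (hs : s < 1) :
    ∃ C : ℝ, 0 < C ∧ ∀ k₁ k₂ : ℝ, 0 ≤ k₂ →
      IntegrableOn
        (fun z : ℝ × ℝ =>
          ‖Complex.exp (Complex.I * (k₁ : ℂ) * (z.1 : ℂ) - (k₂ : ℂ) * (z.2 : ℂ)) - 1‖ ^ 2 /
            (z.1 ^ 2 + z.2 ^ 2) ^ (1 + s))
        (Ioi (0:ℝ) ×ˢ Ioi (0:ℝ)) ∧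
      (∫ z in Ioi (0:ℝ) ×ˢ Ioi (0:ℝ),
          ‖Complex.exp (Complex.I * (k₁ : ℂ) * (z.1 : ℂ) - (k₂ : ℂ) * (z.2 : ℂ)) - 1‖ ^ 2 /
            (z.1 ^ 2 + z.2 ^ 2) ^ (1 + s)) ≤ C * (k₁ ^ 2 + k₂ ^ 2) ^ s := by
  classical
  set Q : Set (ℝ × ℝ) := Ioi (0:ℝ) ×ˢ Ioi (0:ℝ) with hQdef
  have hQm : MeasurableSet Q := measurableSet_Ioi.prod measurableSet_Ioi
  set A : ℝ := ∫ z in Q, gker s z with hAdef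
  have hA0 : 0 ≤ A := setIntegral_nonneg hQm fun z _ => gker_nonneg s z
  refine ⟨4 * (A + 1), by positivity, ?_⟩
  intro k₁ k₂ hk₂
  set F : ℝ × ℝ → ℝ := fun z : ℝ × ℝ =>
    ‖Complex.exp (Complex.I * (k₁ : ℂ) * (z.1 : ℂ) - (k₂ : ℂ) * (z.2 : ℂ)) - 1‖ ^ 2 /
      (z.1 ^ 2 + z.2 ^ 2) ^ (1 + s) with hFdef
  set K : ℝ := k₁ ^ 2 + k₂ ^ 2 with hKdef
  by_cases hK : K = 0
  · -- degenerate case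
    have hk1 : k₁ = 0 := by nlinarith [sq_nonneg k₁, sq_nonneg k₂]
    have hk2 : k₂ = 0 := by nlinarith [sq_nonneg k₁, sq_nonneg k₂]
    have hF0 : F = fun _ => (0:ℝ) := by
      funext z
      simp [hFdef, hk1, hk2, Complex.exp_zero]
    rw [hF0]
    constructor
    · exact integrableOn_zero
    · rw [integral_zero, hK, Real.zero_rpow hs0.ne', mul_zero]
  · have hK0 : 0 < K := lt_of_le_of_ne (by positivity) (Ne.symm hK)
    set c : ℝ := Real.sqrt K with hcdef
    have hc : 0 < c := Real.sqrt_pos.2 hK0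
    have hc2 : c ^ 2 = K := Real.sq_sqrt hK0.le
    set gK : ℝ × ℝ → ℝ := fun z =>
      min 1 (K * (z.1 ^ 2 + z.2 ^ 2)) / (z.1 ^ 2 + z.2 ^ 2) ^ (1 + s) with hgKdef
    have hKp : (0:ℝ) < K ^ (1 + s) := Real.rpow_pos_of_pos hK0 _
    have E1 : gK = fun z => K ^ (1 + s) * gker s (c • z) := by
      funext z
      have hrr : (c * z.1) ^ 2 + (c * z.2) ^ 2 = K * (z.1 ^ 2 + z.2 ^ 2) := by
        rw [← hc2]; ring
      simp only [hgKdef, gker, Prod.smul_fst, Prod.smul_snd, smul_eq_mul]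
      rw [hrr]
      rcases eq_or_ne (z.1 ^ 2 + z.2 ^ 2) 0 with h | h
      · simp [h, Real.zero_rpow (by positivity : (1:ℝ) + s ≠ 0)]
      · have hr0 : 0 < z.1 ^ 2 + z.2 ^ 2 := lt_of_le_of_ne (by positivity) (Ne.symm h)
        have hd : (z.1 ^ 2 + z.2 ^ 2) ^ (1 + s) ≠ 0 := (Real.rpow_pos_of_pos hr0 _).ne'
        rw [Real.mul_rpow hK0.le hr0.le]
        field_simp
    have hmemQ : ∀ z : ℝ × ℝ, c • z ∈ Q ↔ z ∈ Q := by
      intro z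
      simp only [hQdef, mem_prod, mem_Ioi, Prod.smul_fst, Prod.smul_snd, smul_eq_mul]
      constructor
      · rintro ⟨h1, h2⟩
        constructor <;> nlinarith
      · rintro ⟨h1, h2⟩
        exact ⟨mul_pos hc h1, mul_pos hc h2⟩
    have hcomp : IntegrableOn (fun z => gker s (c • z)) Q := by
      have h1 : Integrable (Q.indicator (gker s)) :=
        (integrable_indicator_iff hQm).2 (gker_integrableOn hs0 hs)
      have h2 := h1.comp_smul (R := c) hc.ne'
      have h3 : (fun z => Q.indicator (gker s) (c • z)) =
          Q.indicator fun z => gker s (c • z) := by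
        funext z
        by_cases hz : z ∈ Q
        · rw [Set.indicator_of_mem hz, Set.indicator_of_mem ((hmemQ z).2 hz)]
        · rw [Set.indicator_of_notMem hz,
            Set.indicator_of_notMem (fun h => hz ((hmemQ z).1 h))]
      rw [h3] at h2
      exact (integrable_indicator_iff hQm).1 h2
    have hgK_int : IntegrableOn gK Q := by
      rw [E1]; exact hcomp.const_mul _
    have hQsmul : c • Q = Q := by
      ext z
      rw [Set.mem_smul_set_iff_inv_smul_mem₀ hc.ne']
      have := hmemQ (c⁻¹ • z)
      rw [smul_inv_smul₀ hc.ne'] at this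
      exact this.symm
    have heq : ∫ z in Q, gK z = K ^ s * A := by
      rw [E1, integral_const_mul,
        Measure.setIntegral_comp_smul_of_pos volume (gker s) Q hc, hQsmul]
      have hfr : Module.finrank ℝ (ℝ × ℝ) = 2 := by
        simp [Module.finrank_prod]
      rw [hfr, hc2, smul_eq_mul, ← hAdef]
      rw [show (1:ℝ) + s = s + 1 by ring, Real.rpow_add hK0, Real.rpow_one]
      field_simp
    have hpt : ∀ z ∈ Q, F z ≤ 4 * gK z := by
      rintro ⟨x, y⟩ hz
      rw [hQdef, mem_prod, mem_Ioi, mem_Ioi] at hz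
      obtain ⟨hx, hy⟩ := hz
      set w : ℂ := Complex.I * (k₁ : ℂ) * (x : ℂ) - (k₂ : ℂ) * (y : ℂ) with hwdef
      have hwrep : w = ((-(k₂ * y) : ℝ) : ℂ) + ((k₁ * x : ℝ) : ℂ) * Complex.I := by
        rw [hwdef]; push_cast; ring
      have hw2 : ‖w‖ ^ 2 = (k₁ * x) ^ 2 + (k₂ * y) ^ 2 := by
        rw [hwrep, Complex.sq_norm, Complex.normSq_add_mul_I]; ring
      have hle : ‖w‖ ^ 2 ≤ K * (x ^ 2 + y ^ 2) := by
        rw [hw2, hKdef]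
        nlinarith [sq_nonneg (k₁ * y), sq_nonneg (k₂ * x)]
      have hnum : ‖Complex.exp w - 1‖ ^ 2 ≤ 4 * min 1 (K * (x ^ 2 + y ^ 2)) := by
        rcases le_or_gt (‖w‖) 1 with h | h
        · have h1 := Complex.norm_exp_sub_one_le h
          have hminle : ‖w‖ ^ 2 ≤ min 1 (K * (x ^ 2 + y ^ 2)) :=
            le_min (by nlinarith [norm_nonneg w]) hle
          nlinarith [norm_nonneg (Complex.exp w - 1), norm_nonneg w]
        · have hre : w.re ≤ 0 := by
            rw [hwrep]
            simp only [Complex.add_re, Complex.ofReal_re, Complex.mul_re, Complex.I_re,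
              Complex.ofReal_im, Complex.I_im]
            nlinarith [mul_nonneg hk₂ hy.le]
          have h1 : ‖Complex.exp w‖ ≤ 1 := by
            rw [Complex.norm_exp]
            exact Real.exp_le_one_iff.2 hre
          have h2 : ‖Complex.exp w - 1‖ ≤ 2 := by
            have h3 : ‖Complex.exp w - 1‖ ≤
                ‖Complex.exp w‖ + 1 := by
              simpa using norm_sub_le (Complex.exp w) 1
            linarith
          have hmin : min 1 (K * (x ^ 2 + y ^ 2)) = 1 :=
            min_eq_left (by nlinarith [norm_nonneg w])
          rw [hmin]
          nlinarith [norm_nonneg (Complex.exp w - 1)]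
      have hd : (0:ℝ) < (x ^ 2 + y ^ 2) ^ (1 + s) :=
        Real.rpow_pos_of_pos (by positivity) _
      show ‖Complex.exp w - 1‖ ^ 2 / (x ^ 2 + y ^ 2) ^ (1 + s) ≤
        4 * (min 1 (K * (x ^ 2 + y ^ 2)) / (x ^ 2 + y ^ 2) ^ (1 + s))
      rw [← mul_div_assoc]
      exact div_le_div_of_nonneg_right hnum hd.le
    have hFm : AEStronglyMeasurable F (volume.restrict Q) := by
      have : Measurable F := by
        rw [hFdef]; fun_prop
      exact this.aestronglyMeasurable
    have hF_nonneg : ∀ z : ℝ × ℝ, 0 ≤ F z := fun z =>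
      div_nonneg (by positivity) (by positivity)
    have hgK4 : IntegrableOn (fun z => 4 * gK z) Q := hgK_int.const_mul 4
    have hF_int : IntegrableOn F Q := by
      refine Integrable.mono hgK4 hFm ?_
      refine (ae_restrict_iff' hQm).2 (ae_of_all _ fun z hz => ?_)
      have hgKnn : 0 ≤ gK z := by rw [hgKdef]; exact gK_nonneg s K hK0.le z
      rw [Real.norm_eq_abs, Real.norm_eq_abs, _root_.abs_of_nonneg (hF_nonneg z),
        _root_.abs_of_nonneg (by linarith)]
      exact hpt z hz
    refine ⟨hF_int, ?_⟩
    calc ∫ z in Q, F z ≤ ∫ z in Q, 4 * gK z :=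
          setIntegral_mono_on hF_int hgK4 hQm hpt
      _ = 4 * (K ^ s * A) := by rw [integral_const_mul, heq]
      _ ≤ 4 * (A + 1) * K ^ s := by
          nlinarith [Real.rpow_nonneg hK0.le s]
end

section
/- There exists a constant c > 0 such that for all x ≥ 0, all t ≠ 0 and all b > 0, |∫₀^b e^{-λx + iλ²t} dλ| ≤ c |t|^{-1/2}. Consequently, the improper integral N₂(x,t) = ∫₀^∞ e^{-λx + iλ²t} dλ converges for x > 0 and satisfies |N₂(x,t)| ≤ c |t|^{-1/2} with c independent of x. -/
open Complex Filter MeasureTheory Set intervalIntegral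


private lemma lf_norm (x t l : ℝ) :
    ‖Complex.exp (-(l : ℂ) * (x : ℂ) + Complex.I * (l : ℂ) ^ 2 * (t : ℂ))‖
      = Real.exp (-(l * x)) := by
  rw [Complex.norm_exp]
  congr 1
  simp [Complex.add_re, Complex.mul_re, Complex.mul_im, ← Complex.ofReal_pow]

private lemma lf_cont (x t : ℝ) :
    Continuous fun l : ℝ =>
      Complex.exp (-(l : ℂ) * (x : ℂ) + Complex.I * (l : ℂ) ^ 2 * (t : ℂ)) := by
  fun_prop

private lemma lf_small (x t b : ℝ) (hx : 0 ≤ x) (hb : 0 ≤ b) :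
    ‖∫ l in (0:ℝ)..b,
        Complex.exp (-(l : ℂ) * (x : ℂ) + Complex.I * (l : ℂ) ^ 2 * (t : ℂ))‖ ≤ b := by
  have h := intervalIntegral.norm_integral_le_of_norm_le_const (C := 1)
    (f := fun l : ℝ => Complex.exp (-(l : ℂ) * (x : ℂ) + Complex.I * (l : ℂ) ^ 2 * (t : ℂ)))
    (a := 0) (b := b) ?_
  · calc ‖∫ l in (0:ℝ)..b,
        Complex.exp (-(l : ℂ) * (x : ℂ) + Complex.I * (l : ℂ) ^ 2 * (t : ℂ))‖
        ≤ 1 * |b - 0| := h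
      _ = b := by rw [one_mul, sub_zero, _root_.abs_of_nonneg hb]
  · intro l hl
    rw [Set.uIoc_of_le hb] at hl
    rw [lf_norm]
    have h1 : 0 ≤ l * x := mul_nonneg hl.1.le hx
    exact Real.exp_le_one_iff.mpr (by linarith)

private lemma lf_ibp (x t a b : ℝ) (hx : 0 ≤ x) (ht : t ≠ 0) (ha : 0 < a) (hab : a ≤ b) :
    ‖∫ l in a..b,
        Complex.exp (-(l : ℂ) * (x : ℂ) + Complex.I * (l : ℂ) ^ 2 * (t : ℂ))‖
      ≤ 2 / (a * |t|) := by
  have ht' : (0:ℝ) < |t| := abs_pos.mpr ht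
  have hb0 : 0 < b := lt_of_lt_of_le ha hab
  set c : ℂ := 2 * Complex.I * (t : ℂ) with hc
  have hc0 : c ≠ 0 := by
    simp [hc, Complex.I_ne_zero, Complex.ofReal_ne_zero, ht]
  have hpos : ∀ l ∈ Set.uIcc a b, 0 < l := by
    intro l hl
    rw [Set.uIcc_of_le hab] at hl
    exact lt_of_lt_of_le ha hl.1
  have hlc : ∀ l ∈ Set.uIcc a b, c * (l : ℂ) ≠ 0 := fun l hl =>
    mul_ne_zero hc0 (Complex.ofReal_ne_zero.mpr (hpos l hl).ne')
  set u : ℝ → ℂ := fun l => Complex.exp (-(l:ℂ) * x) * (c * l)⁻¹ with hudef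
  set u' : ℝ → ℂ := fun l =>
      Complex.exp (-(l:ℂ) * x) * (-(x:ℂ)) * (c * l)⁻¹ +
      Complex.exp (-(l:ℂ) * x) * (-c / (c * l) ^ 2) with hu'def
  set v : ℝ → ℂ := fun l => Complex.exp (Complex.I * (l:ℂ) ^ 2 * t) with hvdef
  set v' : ℝ → ℂ := fun l => Complex.exp (Complex.I * (l:ℂ) ^ 2 * t) * (c * l) with hv'def
  have hexp : ∀ l : ℝ, HasDerivAt (fun l : ℝ => Complex.exp (-(l:ℂ) * x))
      (Complex.exp (-(l:ℂ) * x) * (-(x:ℂ))) l := by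
    intro l
    have h1 : HasDerivAt (fun l : ℝ => -(l:ℂ) * x) (-(x:ℂ)) l := by
      simpa using ((Complex.ofRealCLM.hasDerivAt (x := l)).neg.mul_const (x:ℂ))
    exact h1.cexp
  have hU : ∀ l ∈ Set.uIcc a b, HasDerivAt u (u' l) l := by
    intro l hl
    have h3 : HasDerivAt (fun z : ℂ => (c * z)⁻¹) (-c / (c * l) ^ 2) (l : ℂ) := by
      have := ((hasDerivAt_id (l:ℂ)).const_mul c).inv (hlc l hl)
      exact this.congr_deriv (by simp)
    have h4 : HasDerivAt (fun l : ℝ => (c * (l:ℂ))⁻¹) (-c / (c * l) ^ 2) l :=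
      h3.comp_ofReal
    exact (hexp l).mul h4
  have hV : ∀ l ∈ Set.uIcc a b, HasDerivAt v (v' l) l := by
    intro l hl
    have h1 : HasDerivAt (fun l : ℝ => ((l:ℂ)) ^ 2) (2 * (l:ℂ)) l := by
      have : HasDerivAt (fun z : ℂ => z ^ 2) (2 * (l:ℂ)) (l:ℂ) := by
        simpa using hasDerivAt_pow 2 (l:ℂ)
      exact this.comp_ofReal
    have h2 : HasDerivAt (fun l : ℝ => Complex.I * (l:ℂ) ^ 2 * t)
        (Complex.I * (2 * l) * t) l := (h1.const_mul Complex.I).mul_const (t:ℂ)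
    have h3 := h2.cexp
    have heq3 : Complex.exp (Complex.I * (l:ℂ) ^ 2 * t) * (Complex.I * (2 * l) * t) = v' l := by
      simp only [hv'def, hc]; ring
    rwa [heq3] at h3
  have hcontExp : Continuous fun l : ℝ => Complex.exp (-(l:ℂ) * x) := by fun_prop
  have hcontInv : ContinuousOn (fun l : ℝ => (c * (l:ℂ))⁻¹) (Set.uIcc a b) :=
    ContinuousOn.inv₀ (by fun_prop) hlc
  have hu'int : IntervalIntegrable u' volume a b := by
    rw [hu'def]
    apply ContinuousOn.intervalIntegrable
    apply ContinuousOn.add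
    · exact ((hcontExp.continuousOn.mul continuousOn_const).mul hcontInv)
    · exact hcontExp.continuousOn.mul
        (ContinuousOn.div continuousOn_const (by fun_prop)
          (fun l hl => pow_ne_zero 2 (hlc l hl)))
  have hv'int : IntervalIntegrable v' volume a b := by
    rw [hv'def]
    exact (Continuous.intervalIntegrable (by fun_prop) a b)
  have key := intervalIntegral.integral_mul_deriv_eq_deriv_mul hU hV hu'int hv'int
  have heq : Set.EqOn
      (fun l : ℝ => Complex.exp (-(l : ℂ) * (x : ℂ) + Complex.I * (l : ℂ) ^ 2 * (t : ℂ)))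
      (fun l => u l * v' l) (Set.uIcc a b) := by
    intro l hl
    have h0 := hlc l hl
    simp only [hudef, hv'def, Complex.exp_add]
    field_simp
    ring
    exact (mul_inv_cancel₀ (Complex.ofReal_ne_zero.mpr (hpos l hl).ne')).symm
  rw [intervalIntegral.integral_congr heq, key]
  -- norm facts
  have hev : ∀ l : ℝ, ‖Complex.exp (-(l:ℂ) * x)‖ = Real.exp (-(l * x)) := by
    intro l
    rw [Complex.norm_exp]
    congr 1; simp
  have hvv : ∀ l : ℝ, ‖v l‖ = 1 := by
    intro l
    rw [hvdef]
    simp only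
    rw [Complex.norm_exp]
    have : (Complex.I * (l:ℂ) ^ 2 * (t:ℂ)).re = 0 := by
      simp [Complex.mul_re, Complex.mul_im, ← Complex.ofReal_pow]
    rw [this, Real.exp_zero]
  have hcn : ‖c‖ = 2 * |t| := by
    rw [hc]
    rw [norm_mul, norm_mul, Complex.norm_I, Complex.norm_real, Real.norm_eq_abs]
    norm_num
  have hcl : ∀ l : ℝ, 0 < l → ‖c * (l:ℂ)‖ = 2 * |t| * l := by
    intro l hl
    rw [norm_mul, hcn, Complex.norm_real, Real.norm_eq_abs, _root_.abs_of_pos hl]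
  have habs_uv : ∀ l : ℝ, 0 < l → ‖u l * v l‖ = Real.exp (-(l * x)) / (2 * |t| * l) := by
    intro l hl
    simp only [hudef, hvdef, norm_mul, norm_inv]
    rw [hev l, hcn, Complex.norm_real, Real.norm_eq_abs, _root_.abs_of_pos hl]
    have hv1 := hvv l
    rw [hvdef] at hv1
    simp only at hv1
    rw [hv1, mul_one, div_eq_mul_inv]
  have hbd : ∀ l : ℝ, a ≤ l → ‖u l * v l‖ ≤ 1 / (2 * (a * |t|)) := by
    intro l hl
    have hl0 : 0 < l := lt_of_lt_of_le ha hl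
    rw [habs_uv l hl0]
    have he : Real.exp (-(l * x)) ≤ 1 :=
      Real.exp_le_one_iff.mpr (by nlinarith [mul_nonneg hl0.le hx])
    calc Real.exp (-(l * x)) / (2 * |t| * l) ≤ 1 / (2 * |t| * a) :=
        div_le_div₀ zero_le_one he (by positivity) (by nlinarith)
      _ = 1 / (2 * (a * |t|)) := by ring_nf
  -- pointwise bound on u' * v
  have hptw : ∀ l ∈ Set.uIoc a b, ‖u' l * v l‖ ≤ 1 / (|t| * l ^ 2) := by
    intro l hl
    have hl0 : 0 < l := by
      rw [Set.uIoc_of_le hab] at hl; exact lt_trans ha hl.1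
    have hxe : l * x * Real.exp (-(l * x)) ≤ 1 := by
      have h1 := Real.add_one_le_exp (l * x)
      have h2 : Real.exp (-(l * x)) * Real.exp (l * x) = 1 := by
        rw [← Real.exp_add]; simp
      nlinarith [Real.exp_pos (-(l * x)), Real.exp_pos (l * x),
        mul_le_mul_of_nonneg_left h1 (Real.exp_pos (-(l * x))).le]
    have he1 : Real.exp (-(l * x)) ≤ 1 :=
      Real.exp_le_one_iff.mpr (by nlinarith [mul_nonneg hl0.le hx])
    rw [norm_mul, hvv l, mul_one]
    have t1 : ‖Complex.exp (-(l:ℂ) * x) * (-(x:ℂ)) * (c * (l:ℂ))⁻¹‖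
        = Real.exp (-(l * x)) * x / (2 * |t| * l) := by
      rw [norm_mul, norm_mul, norm_neg, norm_inv, hev l, hcl l hl0,
        Complex.norm_real, Real.norm_eq_abs, _root_.abs_of_nonneg hx, div_eq_mul_inv]
    have t2 : ‖Complex.exp (-(l:ℂ) * x) * (-c / (c * (l:ℂ)) ^ 2)‖
        = Real.exp (-(l * x)) * ((2 * |t|) / (2 * |t| * l) ^ 2) := by
      rw [norm_mul, norm_div, norm_neg, norm_pow, hev l, hcl l hl0, hcn]
    have t0 : ‖u' l‖ ≤ ‖Complex.exp (-(l:ℂ) * x) * (-(x:ℂ)) * (c * (l:ℂ))⁻¹‖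
        + ‖Complex.exp (-(l:ℂ) * x) * (-c / (c * (l:ℂ)) ^ 2)‖ := by
      simp only [hu'def]
      exact norm_add_le _ _
    rw [t1, t2] at t0
    have hb1 : Real.exp (-(l * x)) * x / (2 * |t| * l)
        ≤ 1 / (2 * (|t| * l ^ 2)) := by
      rw [div_le_div_iff₀ (by positivity) (by positivity)]
      have h5 : (2 * |t| * l) * (l * x * Real.exp (-(l * x))) ≤ (2 * |t| * l) * 1 :=
        mul_le_mul_of_nonneg_left hxe (by positivity)
      nlinarith [h5, Real.exp_pos (-(l * x))]
    have hb2 : Real.exp (-(l * x)) * ((2 * |t|) / (2 * |t| * l) ^ 2)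
        ≤ 1 / (2 * (|t| * l ^ 2)) := by
      have heq2 : (2 * |t|) / (2 * |t| * l) ^ 2 = 1 / (2 * (|t| * l ^ 2)) := by
        field_simp
      rw [heq2]
      have hp : (0:ℝ) < 1 / (2 * (|t| * l ^ 2)) := by positivity
      nlinarith
    have hsum : 1 / (2 * (|t| * l ^ 2)) + 1 / (2 * (|t| * l ^ 2))
        = 1 / (|t| * l ^ 2) := by
      field_simp
      norm_num
    linarith
  have hgint : IntervalIntegrable (fun l : ℝ => 1 / (|t| * l ^ 2)) volume a b := by
    apply ContinuousOn.intervalIntegrable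
    apply ContinuousOn.div continuousOn_const (by fun_prop)
    intro l hl
    have := hpos l hl
    positivity
  -- value of the comparison integral
  have hzint : (∫ l in a..b, (l:ℝ) ^ (-2 : ℤ)) = a⁻¹ - b⁻¹ := by
    rw [integral_zpow (Or.inr ⟨by norm_num, by
      rw [Set.uIcc_of_le hab]
      intro h0
      exact absurd h0.1 (not_le.mpr ha)⟩)]
    norm_num
    ring
  have hint_eq : (∫ l in a..b, 1 / (|t| * l ^ 2)) = |t|⁻¹ * (a⁻¹ - b⁻¹) := by
    have hptid : ∀ l : ℝ, 1 / (|t| * l ^ 2) = |t|⁻¹ * (l:ℝ) ^ (-2 : ℤ) := by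
      intro l
      have : (l:ℝ) ^ (-2 : ℤ) = (l ^ 2)⁻¹ := by rw [zpow_neg]; norm_cast
      rw [this, one_div, mul_inv]
    simp_rw [hptid]
    rw [intervalIntegral.integral_const_mul, hzint]
  have hIbound : ‖∫ l in a..b, u' l * v l‖ ≤ 1 / (a * |t|) := by
    have h := intervalIntegral.norm_integral_le_abs_of_norm_le
      (f := fun l => u' l * v l) (g := fun l : ℝ => 1 / (|t| * l ^ 2)) (μ := volume)
      (a := a) (b := b) ?_ hgint
    · have hnn : 0 ≤ |t|⁻¹ * (a⁻¹ - b⁻¹) := by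
        apply mul_nonneg (by positivity)
        have : b⁻¹ ≤ a⁻¹ := by gcongr
        linarith
      calc ‖∫ l in a..b, u' l * v l‖ ≤ |∫ l in a..b, 1 / (|t| * l ^ 2)| := h
        _ = |t|⁻¹ * (a⁻¹ - b⁻¹) := by rw [hint_eq, _root_.abs_of_nonneg hnn]
        _ ≤ |t|⁻¹ * a⁻¹ := by
            apply mul_le_mul_of_nonneg_left _ (by positivity)
            have : 0 < b⁻¹ := by positivity
            linarith
        _ = 1 / (a * |t|) := by rw [mul_comm]; field_simp
    · filter_upwards [MeasureTheory.ae_restrict_mem measurableSet_uIoc] with l hl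
      exact hptw l hl
  calc ‖u b * v b - u a * v a - ∫ l in a..b, u' l * v l‖
      ≤ ‖u b * v b - u a * v a‖ + ‖∫ l in a..b, u' l * v l‖ := norm_sub_le _ _
    _ ≤ ‖u b * v b‖ + ‖u a * v a‖ + ‖∫ l in a..b, u' l * v l‖ := by
        have := norm_sub_le (u b * v b) (u a * v a); linarith
    _ ≤ 1 / (2 * (a * |t|)) + 1 / (2 * (a * |t|)) + 1 / (a * |t|) := by
        have h1 := hbd b hab
        have h2 := hbd a le_rfl
        linarith [hIbound]
    _ = 2 / (a * |t|) := by field_simp; ring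

private lemma lf_main (x t b : ℝ) (hx : 0 ≤ x) (ht : t ≠ 0) (hb : 0 < b) :
    ‖∫ l in (0:ℝ)..b,
        Complex.exp (-(l : ℂ) * (x : ℂ) + Complex.I * (l : ℂ) ^ 2 * (t : ℂ))‖
      ≤ 3 * |t| ^ (-(1/2) : ℝ) := by
  have ht' : (0:ℝ) < |t| := abs_pos.mpr ht
  set δ : ℝ := |t| ^ (-(1/2) : ℝ) with hδdef
  have hδ : 0 < δ := Real.rpow_pos_of_pos ht' _
  have hdd : δ * δ * |t| = 1 := by
    have h1 : δ * δ = |t| ^ ((-(1/2) : ℝ) + (-(1/2) : ℝ)) := (Real.rpow_add ht' _ _).symm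
    have h2 : ((-(1/2) : ℝ) + (-(1/2) : ℝ)) = (-1 : ℝ) := by norm_num
    rw [h1, h2, Real.rpow_neg_one]
    field_simp
  by_cases hbd : b ≤ δ
  · calc ‖∫ l in (0:ℝ)..b,
        Complex.exp (-(l : ℂ) * (x : ℂ) + Complex.I * (l : ℂ) ^ 2 * (t : ℂ))‖
        ≤ b := lf_small x t b hx hb.le
      _ ≤ 3 * δ := by nlinarith
  · push_neg at hbd
    have hi1 : IntervalIntegrable
        (fun l : ℝ => Complex.exp (-(l : ℂ) * (x : ℂ) + Complex.I * (l : ℂ) ^ 2 * (t : ℂ)))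
        volume 0 δ := (lf_cont x t).intervalIntegrable 0 δ
    have hi2 : IntervalIntegrable
        (fun l : ℝ => Complex.exp (-(l : ℂ) * (x : ℂ) + Complex.I * (l : ℂ) ^ 2 * (t : ℂ)))
        volume δ b := (lf_cont x t).intervalIntegrable δ b
    have hsplit := (intervalIntegral.integral_add_adjacent_intervals hi1 hi2).symm
    rw [hsplit]
    have h1 := lf_small x t δ hx hδ.le
    have h2 := lf_ibp x t δ b hx ht hδ hbd.le
    have h3 : 2 / (δ * |t|) = 2 * δ := by
      rw [div_eq_iff (by positivity)]
      nlinarith [hdd]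
    calc ‖(∫ l in (0:ℝ)..δ,
          Complex.exp (-(l : ℂ) * (x : ℂ) + Complex.I * (l : ℂ) ^ 2 * (t : ℂ))) +
        ∫ l in δ..b,
          Complex.exp (-(l : ℂ) * (x : ℂ) + Complex.I * (l : ℂ) ^ 2 * (t : ℂ))‖
        ≤ ‖∫ l in (0:ℝ)..δ,
            Complex.exp (-(l : ℂ) * (x : ℂ) + Complex.I * (l : ℂ) ^ 2 * (t : ℂ))‖ +
          ‖∫ l in δ..b,
            Complex.exp (-(l : ℂ) * (x : ℂ) + Complex.I * (l : ℂ) ^ 2 * (t : ℂ))‖ :=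
        norm_add_le _ _
      _ ≤ δ + 2 / (δ * |t|) := add_le_add h1 h2
      _ = 3 * δ := by rw [h3]; ring

/-- Van der Corput-type bound: there is `c > 0`, independent of `x`, `t` and `b`,
such that `|∫₀^b e^{-λx + iλ²t} dλ| ≤ c |t|^{-1/2}` for all `x ≥ 0`, `t ≠ 0`, `b > 0`;
consequently the improper integral `N₂(x,t) = ∫₀^∞ e^{-λx + iλ²t} dλ` converges for
`x > 0` and obeys the same bound. -/
theorem laplace_fresnel_bound :
    ∃ c : ℝ, 0 < c ∧
      (∀ x t b : ℝ, 0 ≤ x → t ≠ 0 → 0 < b →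
        ‖∫ l in (0:ℝ)..b,
            Complex.exp (-(l : ℂ) * (x : ℂ) + Complex.I * (l : ℂ) ^ 2 * (t : ℂ))‖ ≤
          c * |t| ^ (-(1/2) : ℝ)) ∧
      (∀ x t : ℝ, 0 < x → t ≠ 0 → ∃ L : ℂ,
        Tendsto (fun b : ℝ => ∫ l in (0:ℝ)..b,
            Complex.exp (-(l : ℂ) * (x : ℂ) + Complex.I * (l : ℂ) ^ 2 * (t : ℂ)))
          atTop (nhds L) ∧
        ‖L‖ ≤ c * |t| ^ (-(1/2) : ℝ)) := by
  refine ⟨3, by norm_num, ?_, ?_⟩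
  · intro x t b hx ht hb
    exact lf_main x t b hx ht hb
  · intro x t hx ht
    have hint : IntegrableOn
        (fun l : ℝ => Complex.exp (-(l : ℂ) * (x : ℂ) + Complex.I * (l : ℂ) ^ 2 * (t : ℂ)))
        (Set.Ioi (0:ℝ)) volume := by
      apply MeasureTheory.Integrable.mono' (g := fun l : ℝ => Real.exp (-x * l))
        (exp_neg_integrableOn_Ioi 0 hx)
      · exact (lf_cont x t).aestronglyMeasurable.restrict
      · filter_upwards with l
        rw [lf_norm]
        rw [mul_comm, neg_mul]
    have hT := MeasureTheory.intervalIntegral_tendsto_integral_Ioi 0 hint tendsto_id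
    refine ⟨_, hT, ?_⟩
    have habs := (continuous_norm.tendsto _).comp hT
    apply le_of_tendsto habs
    filter_upwards [eventually_gt_atTop (0:ℝ)] with b hb
    exact lf_main x t b hx.le ht hb
end
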